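/- Let λ, μ ∈ (0,∞), d ∈ ℕ with d ≥ 2, and r ∈ (0,1). Write ψ_{u,T}(x) = I_{1,T}(u, x^{1/d}) on [0,1] and let ψ̂_{u,T} be its convex minorant. Then: (i) if ψ̂_{0,T}(r^d) = ψ_{0,T}(r^d) for some T > 0, then ψ̂_{0,T'}(r^d) = ψ_{0,T'}(r^d) for all T' > T; and (ii) if ψ̂_{1,T}(r^d) < ψ_{1,T}(r^d) for some T > 0, then ψ̂_{1,T'}(r^d) < ψ_{1,T'}(r^d) for all T' > T. -/

import Mathlib

noncomputable section

open MeasureTheory Real Filter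

/-- Probability that an initially inactive edge is active at time `t`. -/
def p01 (lam mu t : ℝ) : ℝ := (lam - lam * Real.exp (-(t * (lam + mu)))) / (lam + mu)

/-- Probability that an initially active edge is active at time `t`. -/
def p11 (lam mu t : ℝ) : ℝ := (lam + mu * Real.exp (-(t * (lam + mu)))) / (lam + mu)

/-- The cumulant-type function `J_{t,v}(u)`. -/
def Jfun (lam mu t v u : ℝ) : ℝ :=
  u * Real.log (1 - p11 lam mu t + Real.exp v * p11 lam mu t) +
  (1 - u) * Real.log (1 - p01 lam mu t + Real.exp v * p01 lam mu t)

/-- The one-step rate function `I_{1,t}(u,x) = sup_v [v x - J_{t,v}(u)]`. -/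
def I1 (lam mu t u x : ℝ) : ℝ := ⨆ v : ℝ, (v * x - Jfun lam mu t v u)

/-- `φ` is the convex minorant of `ψ` on `[0,1]`: the largest convex function on `[0,1]`
bounded above by `ψ`. -/
def IsConvexMinorant (ψ φ : ℝ → ℝ) : Prop :=
  ConvexOn ℝ (Set.Icc (0:ℝ) 1) φ ∧ (∀ x ∈ Set.Icc (0:ℝ) 1, φ x ≤ ψ x) ∧
  ∀ φ' : ℝ → ℝ, ConvexOn ℝ (Set.Icc (0:ℝ) 1) φ' → (∀ x ∈ Set.Icc (0:ℝ) 1, φ' x ≤ ψ x) →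
    ∀ x ∈ Set.Icc (0:ℝ) 1, φ' x ≤ φ x

/-! ### Auxiliary material -/

/-- Bernoulli cumulant tilt. -/
def Ffun (p y v : ℝ) : ℝ := v * y - Real.log (1 - p + Real.exp v * p)

lemma Ffun_le (p y : ℝ) (hp : p ∈ Set.Ioo (0:ℝ) 1) (hy : y ∈ Set.Icc (0:ℝ) 1) (v : ℝ) :
    Ffun p y v ≤ max (-Real.log (1 - p)) (-Real.log p) := by
  obtain ⟨hp0, hp1⟩ := hp
  obtain ⟨hy0, hy1⟩ := hy
  have h1p : 0 < 1 - p := by linarith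
  have hev : 0 < Real.exp v := Real.exp_pos v
  rcases le_total v 0 with hv | hv
  · have hlog : Real.log (1 - p) ≤ Real.log (1 - p + Real.exp v * p) :=
      Real.log_le_log h1p (by nlinarith)
    have : Ffun p y v ≤ -Real.log (1 - p) := by
      have : v * y ≤ 0 := mul_nonpos_of_nonpos_of_nonneg hv hy0
      unfold Ffun; linarith
    exact this.trans (le_max_left _ _)
  · have hpos : 0 < Real.exp v * p := by positivity
    have hlog : Real.log (Real.exp v * p) ≤ Real.log (1 - p + Real.exp v * p) :=
      Real.log_le_log hpos (by linarith)
    have hlog2 : Real.log (Real.exp v * p) = v + Real.log p := by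
      rw [Real.log_mul (Real.exp_ne_zero v) (ne_of_gt hp0), Real.log_exp]
    have : Ffun p y v ≤ -Real.log p := by
      have hvy : v * y ≤ v := by nlinarith
      unfold Ffun; rw [hlog2] at hlog; linarith
    exact this.trans (le_max_right _ _)

lemma Ffun_bddAbove (p y : ℝ) (hp : p ∈ Set.Ioo (0:ℝ) 1) (hy : y ∈ Set.Icc (0:ℝ) 1) :
    BddAbove (Set.range (Ffun p y)) := by
  refine ⟨max (-Real.log (1 - p)) (-Real.log p), ?_⟩
  rintro _ ⟨v, rfl⟩
  exact Ffun_le p y hp hy v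

lemma Ffun_sup_nonneg (p y : ℝ) (hp : p ∈ Set.Ioo (0:ℝ) 1) (hy : y ∈ Set.Icc (0:ℝ) 1) :
    0 ≤ ⨆ v, Ffun p y v := by
  have h0 : Ffun p y 0 = 0 := by simp [Ffun]
  have := le_ciSup (Ffun_bddAbove p y hp hy) 0
  rw [h0] at this; exact this

lemma ciSup_add_const {f : ℝ → ℝ} (hf : BddAbove (Set.range f)) (c : ℝ) :
    (⨆ v, (f v + c)) = (⨆ v, f v) + c := by
  obtain ⟨M, hM⟩ := hf
  have hM' : ∀ v, f v ≤ M := fun v => hM ⟨v, rfl⟩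
  apply le_antisymm
  · exact ciSup_le fun v => add_le_add_left (le_ciSup ⟨M, fun x hx => hx.choose_spec ▸ hM' _⟩ v) c
  · have hbdd : BddAbove (Set.range fun v => f v + c) :=
      ⟨M + c, by rintro _ ⟨v, rfl⟩; exact add_le_add_left (hM' v) c⟩
    have : ∀ v, f v ≤ (⨆ v, (f v + c)) - c := fun v => by
      have := le_ciSup hbdd v; linarith
    have h2 := ciSup_le this
    linarith

lemma ciSup_shift (f : ℝ → ℝ) (B : ℝ) : (⨆ v, f (v - B)) = ⨆ v, f v := by
  have : Set.range (fun v => f (v - B)) = Set.range f := by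
    ext t
    constructor
    · rintro ⟨v, rfl⟩; exact ⟨v - B, rfl⟩
    · rintro ⟨w, rfl⟩; exact ⟨w + B, by simp⟩
  rw [iSup, iSup, this]

/-- Key tilting identity for the Legendre sup. -/
lemma key_identity (p p' y : ℝ) (hp : p ∈ Set.Ioo (0:ℝ) 1) (hp' : p' ∈ Set.Ioo (0:ℝ) 1)
    (hy : y ∈ Set.Icc (0:ℝ) 1) :
    (⨆ v, Ffun p' y v) =
      (⨆ v, Ffun p y v) +
        (Real.log ((1 - p) / (1 - p')) + Real.log (p * (1 - p') / (p' * (1 - p))) * y) := by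
  obtain ⟨hp0, hp1⟩ := hp
  obtain ⟨hp'0, hp'1⟩ := hp'
  have h1p : 0 < 1 - p := by linarith
  have h1p' : 0 < 1 - p' := by linarith
  set B : ℝ := Real.log (p * (1 - p') / (p' * (1 - p))) with hB
  set A : ℝ := Real.log ((1 - p) / (1 - p')) with hA
  have hargB : (0:ℝ) < p * (1 - p') / (p' * (1 - p)) := by positivity
  have hexpB : Real.exp B = p * (1 - p') / (p' * (1 - p)) := Real.exp_log hargB
  have hptwise : ∀ v, Ffun p' y v = Ffun p y (v - B) + (A + B * y) := by
    intro v
    have hkey : 1 - p + Real.exp (v - B) * p = ((1 - p) / (1 - p')) * (1 - p' + Real.exp v * p') := by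
      have : Real.exp (v - B) = Real.exp v / Real.exp B := by rw [Real.exp_sub]
      rw [this, hexpB]
      field_simp
    have hlog : Real.log (1 - p + Real.exp (v - B) * p) =
        A + Real.log (1 - p' + Real.exp v * p') := by
      rw [hkey, Real.log_mul (by positivity) (by positivity), hA]
    unfold Ffun
    rw [hlog]
    ring
  calc (⨆ v, Ffun p' y v) = ⨆ v, (Ffun p y (v - B) + (A + B * y)) := by
        exact iSup_congr hptwise
    _ = (⨆ v, Ffun p y (v - B)) + (A + B * y) := by
        apply ciSup_add_const
        have h := Ffun_bddAbove p y ⟨hp0, hp1⟩ hy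
        obtain ⟨M, hM⟩ := h
        exact ⟨M, by rintro _ ⟨v, rfl⟩; exact hM ⟨v - B, rfl⟩⟩
    _ = (⨆ v, Ffun p y v) + (A + B * y) := by rw [ciSup_shift]

lemma I1_zero_eq (lam mu t y : ℝ) : I1 lam mu t 0 y = ⨆ v, Ffun (p01 lam mu t) y v := by
  unfold I1
  congr 1
  funext v
  simp [Jfun, Ffun]

lemma I1_one_eq (lam mu t y : ℝ) : I1 lam mu t 1 y = ⨆ v, Ffun (p11 lam mu t) y v := by
  unfold I1
  congr 1
  funext v
  simp [Jfun, Ffun]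

lemma p01_mem (lam mu t : ℝ) (hlam : 0 < lam) (hmu : 0 < mu) (ht : 0 < t) :
    p01 lam mu t ∈ Set.Ioo (0:ℝ) 1 := by
  unfold p01
  have hs : 0 < lam + mu := by linarith
  have he1 : Real.exp (-(t * (lam + mu))) < 1 := Real.exp_lt_one_iff.2 (by nlinarith)
  have he0 : 0 < Real.exp (-(t * (lam + mu))) := Real.exp_pos _
  constructor
  · apply div_pos _ hs; nlinarith
  · rw [div_lt_one hs]; nlinarith

lemma p11_mem (lam mu t : ℝ) (hlam : 0 < lam) (hmu : 0 < mu) (ht : 0 < t) :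
    p11 lam mu t ∈ Set.Ioo (0:ℝ) 1 := by
  unfold p11
  have hs : 0 < lam + mu := by linarith
  have he1 : Real.exp (-(t * (lam + mu))) < 1 := Real.exp_lt_one_iff.2 (by nlinarith)
  have he0 : 0 < Real.exp (-(t * (lam + mu))) := Real.exp_pos _
  constructor
  · apply div_pos _ hs; nlinarith
  · rw [div_lt_one hs]; nlinarith

lemma p01_mono (lam mu t t' : ℝ) (hlam : 0 < lam) (hmu : 0 < mu) (htt : t < t') :
    p01 lam mu t < p01 lam mu t' := by
  have hs : 0 < lam + mu := by linarith
  have he : Real.exp (-(t' * (lam + mu))) < Real.exp (-(t * (lam + mu))) := by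
    apply Real.exp_lt_exp.2; nlinarith
  unfold p01
  apply div_lt_div_of_pos_right _ hs
  nlinarith

lemma p11_anti (lam mu t t' : ℝ) (hlam : 0 < lam) (hmu : 0 < mu) (htt : t < t') :
    p11 lam mu t' < p11 lam mu t := by
  have hs : 0 < lam + mu := by linarith
  have he : Real.exp (-(t' * (lam + mu))) < Real.exp (-(t * (lam + mu))) := by
    apply Real.exp_lt_exp.2; nlinarith
  unfold p11
  apply div_lt_div_of_pos_right _ hs
  nlinarith

/-- Convexity of `x ↦ A + B * x ^ c` on `[0,1]` when `B ≤ 0` and `0 < c < 1`. -/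
lemma convexOn_neg_rpow (A B c : ℝ) (hB : B ≤ 0) (hc0 : 0 < c) (hc1 : c < 1) :
    ConvexOn ℝ (Set.Icc (0:ℝ) 1) (fun x => A + B * x ^ c) := by
  have hconc : ConcaveOn ℝ (Set.Icc (0:ℝ) 1) (fun x : ℝ => x ^ c) :=
    (Real.strictConcaveOn_rpow hc0 hc1).concaveOn.subset
      (fun x hx => hx.1) (convex_Icc _ _)
  have h2 : ConvexOn ℝ (Set.Icc (0:ℝ) 1) (fun x : ℝ => -(x ^ c)) := hconc.neg
  have h3 : ConvexOn ℝ (Set.Icc (0:ℝ) 1) (fun x : ℝ => (-B) • -(x ^ c)) :=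
    h2.smul (by linarith)
  have h4 : ConvexOn ℝ (Set.Icc (0:ℝ) 1) (fun x : ℝ => (-B) • -(x ^ c) + A) :=
    h3.add (convexOn_const _ (convex_Icc _ _))
  have heq : (fun x : ℝ => A + B * x ^ c) = fun x : ℝ => (-B) • -(x ^ c) + A := by
    funext x; simp [smul_eq_mul]; ring
  rw [heq]; exact h4

/-- Existence of the convex minorant for a nonnegative function. -/
lemma exists_isConvexMinorant (ψ : ℝ → ℝ) (h0 : ∀ x ∈ Set.Icc (0:ℝ) 1, 0 ≤ ψ x) :
    ∃ Φ : ℝ → ℝ, IsConvexMinorant ψ Φ := by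
  set S : Set (ℝ → ℝ) :=
    {φ | ConvexOn ℝ (Set.Icc (0:ℝ) 1) φ ∧ ∀ x ∈ Set.Icc (0:ℝ) 1, φ x ≤ ψ x} with hS
  have h0S : (fun _ => (0:ℝ)) ∈ S := ⟨convexOn_const _ (convex_Icc _ _), h0⟩
  set Φ : ℝ → ℝ := fun x => sSup ((fun φ => φ x) '' S) with hΦ
  have hne : ∀ x : ℝ, ((fun φ => φ x) '' S).Nonempty := fun x => ⟨0, ⟨_, h0S, rfl⟩⟩
  have hbdd : ∀ x ∈ Set.Icc (0:ℝ) 1, BddAbove ((fun φ => φ x) '' S) := by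
    intro x hx
    exact ⟨ψ x, by rintro _ ⟨φ, hφ, rfl⟩; exact hφ.2 x hx⟩
  have hle : ∀ φ ∈ S, ∀ x ∈ Set.Icc (0:ℝ) 1, φ x ≤ Φ x := by
    intro φ hφ x hx
    exact le_csSup (hbdd x hx) ⟨φ, hφ, rfl⟩
  refine ⟨Φ, ⟨convex_Icc _ _, ?_⟩, ?_, ?_⟩
  · intro x hx y hy a b ha hb hab
    have hmem : a • x + b • y ∈ Set.Icc (0:ℝ) 1 := (convex_Icc (0:ℝ) 1) hx hy ha hb hab
    apply csSup_le (hne _)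
    rintro _ ⟨φ, hφ, rfl⟩
    calc φ (a • x + b • y) ≤ a • φ x + b • φ y := hφ.1.2 hx hy ha hb hab
      _ ≤ a • Φ x + b • Φ y := by
          have h1 := hle φ hφ x hx
          have h2 := hle φ hφ y hy
          simp only [smul_eq_mul]
          nlinarith
  · intro x hx
    apply csSup_le (hne _)
    rintro _ ⟨φ, hφ, rfl⟩
    exact hφ.2 x hx
  · intro φ' hconv hle' x hx
    exact hle φ' ⟨hconv, hle'⟩ x hx
theorem stmt_18 (lam mu : ℝ) (hlam : 0 < lam) (hmu : 0 < mu)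
    (d : ℕ) (hd : 2 ≤ d) (r : ℝ) (hr : r ∈ Set.Ioo (0:ℝ) 1) :
    ((∀ T : ℝ, 0 < T →
        (∀ psihat : ℝ → ℝ,
          IsConvexMinorant (fun x => I1 lam mu T 0 (x ^ (1 / (d:ℝ)))) psihat →
          psihat (r ^ d) = I1 lam mu T 0 ((r ^ d) ^ (1 / (d:ℝ)))) →
        ∀ T' : ℝ, T < T' →
          ∀ psihat : ℝ → ℝ,
            IsConvexMinorant (fun x => I1 lam mu T' 0 (x ^ (1 / (d:ℝ)))) psihat →
            psihat (r ^ d) = I1 lam mu T' 0 ((r ^ d) ^ (1 / (d:ℝ)))) ∧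
     (∀ T : ℝ, 0 < T →
        (∀ psihat : ℝ → ℝ,
          IsConvexMinorant (fun x => I1 lam mu T 1 (x ^ (1 / (d:ℝ)))) psihat →
          psihat (r ^ d) < I1 lam mu T 1 ((r ^ d) ^ (1 / (d:ℝ)))) →
        ∀ T' : ℝ, T < T' →
          ∀ psihat : ℝ → ℝ,
            IsConvexMinorant (fun x => I1 lam mu T' 1 (x ^ (1 / (d:ℝ)))) psihat →
            psihat (r ^ d) < I1 lam mu T' 1 ((r ^ d) ^ (1 / (d:ℝ))))) := by
  set c : ℝ := 1 / (d:ℝ) with hc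
  have hd1 : (1:ℝ) < (d:ℝ) := by exact_mod_cast lt_of_lt_of_le one_lt_two (by exact_mod_cast hd)
  have hc0 : 0 < c := by rw [hc]; positivity
  have hc1 : c < 1 := by rw [hc]; rw [div_lt_one (by linarith)]; exact hd1
  have ha : (r:ℝ) ^ d ∈ Set.Icc (0:ℝ) 1 :=
    ⟨pow_nonneg hr.1.le d, pow_le_one₀ hr.1.le hr.2.le⟩
  have hy : ∀ x ∈ Set.Icc (0:ℝ) 1, x ^ c ∈ Set.Icc (0:ℝ) 1 := fun x hx =>
    ⟨Real.rpow_nonneg hx.1 c, Real.rpow_le_one hx.1 hx.2 hc0.le⟩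
  constructor
  · -- part (i): u = 0
    intro T hT hyp T' hTT' psihat' hmin'
    have hT' : 0 < T' := hT.trans hTT'
    set p := p01 lam mu T with hpdef
    set p' := p01 lam mu T' with hp'def
    have hp : p ∈ Set.Ioo (0:ℝ) 1 := p01_mem lam mu T hlam hmu hT
    have hp' : p' ∈ Set.Ioo (0:ℝ) 1 := p01_mem lam mu T' hlam hmu hT'
    have hpp' : p < p' := p01_mono lam mu T T' hlam hmu hTT'
    set A : ℝ := Real.log ((1 - p) / (1 - p')) with hA
    set B : ℝ := Real.log (p * (1 - p') / (p' * (1 - p))) with hBdef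
    have h1p : 0 < 1 - p := by linarith [hp.2]
    have h1p' : 0 < 1 - p' := by linarith [hp'.2]
    have hB : B ≤ 0 := by
      apply Real.log_nonpos (le_of_lt (div_pos (mul_pos hp.1 h1p') (mul_pos hp'.1 h1p)))
      rw [div_le_one (mul_pos hp'.1 h1p)]
      nlinarith [hp.1, hp'.1]
    have hpsi : ∀ x ∈ Set.Icc (0:ℝ) 1,
        I1 lam mu T' 0 (x ^ c) = I1 lam mu T 0 (x ^ c) + (A + B * x ^ c) := by
      intro x hx
      rw [I1_zero_eq, I1_zero_eq]
      exact key_identity p p' (x ^ c) hp hp' (hy x hx)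
    have hnn : ∀ x ∈ Set.Icc (0:ℝ) 1, 0 ≤ I1 lam mu T 0 (x ^ c) := by
      intro x hx
      rw [I1_zero_eq]
      exact Ffun_sup_nonneg p (x ^ c) hp (hy x hx)
    obtain ⟨Φ, hΦ⟩ := exists_isConvexMinorant (fun x => I1 lam mu T 0 (x ^ c)) hnn
    have heq : Φ (r ^ d) = I1 lam mu T 0 ((r ^ d) ^ c) := hyp Φ hΦ
    have hg : ConvexOn ℝ (Set.Icc (0:ℝ) 1) (fun x => A + B * x ^ c) :=
      convexOn_neg_rpow A B c hB hc0 hc1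
    have hφ'conv : ConvexOn ℝ (Set.Icc (0:ℝ) 1) (fun x => Φ x + (A + B * x ^ c)) :=
      hΦ.1.add hg
    have hφ'le : ∀ x ∈ Set.Icc (0:ℝ) 1,
        Φ x + (A + B * x ^ c) ≤ I1 lam mu T' 0 (x ^ c) := by
      intro x hx
      rw [hpsi x hx]
      have := hΦ.2.1 x hx
      simpa using add_le_add_right this (A + B * x ^ c)
    have hle1 := hmin'.2.2 (fun x => Φ x + (A + B * x ^ c)) hφ'conv hφ'le (r ^ d) ha
    have hle2 := hmin'.2.1 (r ^ d) ha
    have h3 := hpsi (r ^ d) ha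
    simp only at hle1 hle2 ⊢
    linarith [heq ▸ hle1, h3]
  · -- part (ii): u = 1
    intro T hT hyp T' hTT' psihat' hmin'
    have hT' : 0 < T' := hT.trans hTT'
    set q := p11 lam mu T with hqdef
    set q' := p11 lam mu T' with hq'def
    have hq : q ∈ Set.Ioo (0:ℝ) 1 := p11_mem lam mu T hlam hmu hT
    have hq' : q' ∈ Set.Ioo (0:ℝ) 1 := p11_mem lam mu T' hlam hmu hT'
    have hqq' : q' < q := p11_anti lam mu T T' hlam hmu hTT'
    set A : ℝ := Real.log ((1 - q) / (1 - q')) with hA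
    set B : ℝ := Real.log (q * (1 - q') / (q' * (1 - q))) with hBdef
    have h1q : 0 < 1 - q := by linarith [hq.2]
    have h1q' : 0 < 1 - q' := by linarith [hq'.2]
    have hB : 0 ≤ B := by
      apply Real.log_nonneg
      rw [one_le_div (mul_pos hq'.1 h1q)]
      nlinarith [hq.1, hq'.1]
    have hpsi : ∀ x ∈ Set.Icc (0:ℝ) 1,
        I1 lam mu T' 1 (x ^ c) = I1 lam mu T 1 (x ^ c) + (A + B * x ^ c) := by
      intro x hx
      rw [I1_one_eq, I1_one_eq]
      exact key_identity q q' (x ^ c) hq hq' (hy x hx)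
    have hnn : ∀ x ∈ Set.Icc (0:ℝ) 1, 0 ≤ I1 lam mu T 1 (x ^ c) := by
      intro x hx
      rw [I1_one_eq]
      exact Ffun_sup_nonneg q (x ^ c) hq (hy x hx)
    obtain ⟨Φ, hΦ⟩ := exists_isConvexMinorant (fun x => I1 lam mu T 1 (x ^ c)) hnn
    have hlt : Φ (r ^ d) < I1 lam mu T 1 ((r ^ d) ^ c) := hyp Φ hΦ
    have hg : ConvexOn ℝ (Set.Icc (0:ℝ) 1) (fun x => -A + (-B) * x ^ c) :=
      convexOn_neg_rpow (-A) (-B) c (by linarith) hc0 hc1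
    have hφ'conv : ConvexOn ℝ (Set.Icc (0:ℝ) 1) (fun x => psihat' x + (-A + (-B) * x ^ c)) :=
      hmin'.1.add hg
    have hφ'le : ∀ x ∈ Set.Icc (0:ℝ) 1,
        psihat' x + (-A + (-B) * x ^ c) ≤ I1 lam mu T 1 (x ^ c) := by
      intro x hx
      have h1 := hmin'.2.1 x hx
      have h2 := hpsi x hx
      simp only at h1
      linarith
    have hle1 := hΦ.2.2 (fun x => psihat' x + (-A + (-B) * x ^ c)) hφ'conv hφ'le (r ^ d) ha
    have h3 := hpsi (r ^ d) ha
    linarith
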